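/- Let α, β, p, q, k > 0 with kp < 1 and kq > 1, let T_c > 0, let f : ℝⁿ → ℝⁿ with f(0) = 0, and let V : ℝⁿ → ℝ be continuously differentiable with V(0) = 0, V(x) > 0 for all x ≠ 0, and V radially unbounded (V(x) → ∞ as ‖x‖ → ∞). Suppose that for all x ≠ 0, ⟨∇V(x), f(x)⟩ ≤ -(γ(α,β,p,q,k)/T_c)·(α V(x)^p + β V(x)^q)^k. Then every solution x : [0,∞) → ℝⁿ of x'(t) = f(x(t)) satisfies x(t) = 0 for all t ≥ T_c; i.e., the origin is predefined-time stable with predefined time T_c. -/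

import Mathlib

open Real Set MeasureTheory intervalIntegral

open Real Set MeasureTheory intervalIntegral

lemma betaReal {s t : ℝ} (hs : 0 < s) (ht : 0 < t) :
    ∫ x in (0:ℝ)..1, x ^ (s - 1) * (1 - x) ^ (t - 1) =
      Real.Gamma s * Real.Gamma t / Real.Gamma (s + t) := by
  have key : Complex.betaIntegral s t =
      ((∫ x in (0:ℝ)..1, x ^ (s - 1) * (1 - x) ^ (t - 1) : ℝ) : ℂ) := by
    rw [Complex.betaIntegral, ← intervalIntegral.integral_ofReal]
    refine intervalIntegral.integral_congr fun x hx => ?_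
    rw [Set.uIcc_of_le (by norm_num : (0:ℝ) ≤ 1)] at hx
    rw [show ((s:ℂ) - 1) = ((s - 1 : ℝ) : ℂ) by push_cast; ring,
      show ((t:ℂ) - 1) = ((t - 1 : ℝ) : ℂ) by push_cast; ring,
      show ((1:ℂ) - (x:ℂ)) = ((1 - x : ℝ) : ℂ) by push_cast; ring,
      ← Complex.ofReal_cpow hx.1, ← Complex.ofReal_cpow (by linarith [hx.2] : (0:ℝ) ≤ 1 - x),
      ← Complex.ofReal_mul]
  have h := Complex.Gamma_mul_Gamma_eq_betaIntegral
      (by simpa using hs : 0 < (s:ℂ).re) (by simpa using ht : 0 < (t:ℂ).re)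
  rw [key] at h
  have h2 : ((Real.Gamma s * Real.Gamma t : ℝ) : ℂ) =
      ((Real.Gamma (s + t) * ∫ x in (0:ℝ)..1, x ^ (s - 1) * (1 - x) ^ (t - 1) : ℝ) : ℂ) := by
    push_cast
    rw [← Complex.Gamma_ofReal, ← Complex.Gamma_ofReal, ← Complex.Gamma_ofReal]
    push_cast at h ⊢
    simpa using h
  have h3 := Complex.ofReal_injective h2
  have hG : Real.Gamma (s + t) ≠ 0 := (Real.Gamma_pos_of_pos (by linarith)).ne'
  field_simp
  linarith [h3]

lemma betaII {s t : ℝ} (hs : 0 < s) (ht : 0 < t) :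
    IntervalIntegrable (fun x => x ^ (s - 1) * (1 - x) ^ (t - 1)) volume 0 1 := by
  have p1 : IntervalIntegrable (fun x => x ^ (s - 1) * (1 - x) ^ (t - 1)) volume 0 2⁻¹ := by
    refine (intervalIntegrable_rpow' (by linarith) : IntervalIntegrable
      (fun x : ℝ => x ^ (s - 1)) volume 0 2⁻¹).mul_continuousOn ?_
    refine ContinuousOn.rpow_const (by fun_prop) fun x hx => Or.inl ?_
    rw [Set.uIcc_of_le (by norm_num : (0:ℝ) ≤ 2⁻¹)] at hx
    have := hx.2
    intro h
    nlinarith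
  have p2 : IntervalIntegrable (fun x => x ^ (s - 1) * (1 - x) ^ (t - 1)) volume 2⁻¹ 1 := by
    have base : IntervalIntegrable (fun x : ℝ => x ^ (t - 1)) volume 0 2⁻¹ :=
      intervalIntegrable_rpow' (by linarith)
    have comp := base.comp_sub_left 1
    norm_num at comp
    refine IntervalIntegrable.continuousOn_mul (comp.symm.mono_set ?_) ?_
    · rw [Set.uIcc_of_le (by norm_num : (1/2:ℝ) ≤ 1)]
      norm_num
    refine ContinuousOn.rpow_const (by fun_prop) fun x hx => Or.inl ?_
    rw [Set.uIcc_of_le (by norm_num : (2⁻¹:ℝ) ≤ 1)] at hx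
    have := hx.1
    intro h
    nlinarith
  exact p1.trans p2

lemma betaIoi {s t : ℝ} (hs : 0 < s) (ht : 0 < t) :
    IntegrableOn (fun u : ℝ => u ^ (s - 1) * (1 + u) ^ (-(s + t))) (Ioi 0) ∧
      ∫ u in Ioi (0:ℝ), u ^ (s - 1) * (1 + u) ^ (-(s + t)) =
        Real.Gamma s * Real.Gamma t / Real.Gamma (s + t) := by
  set φ : ℝ → ℝ := fun x => x / (1 - x) with hφ
  set φ' : ℝ → ℝ := fun x => ((1 - x) ^ 2)⁻¹ with hφ'
  have hderiv : ∀ x ∈ Ioo (0:ℝ) 1, HasDerivWithinAt φ (φ' x) (Ioo 0 1) x := by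
    intro x hx
    have h1 : (0:ℝ) < 1 - x := by linarith [hx.2]
    have := (hasDerivAt_id x).div ((hasDerivAt_id x).const_sub 1) h1.ne'
    refine (HasDerivAt.hasDerivWithinAt ?_)
    convert this using 1
    · rfl
    · rfl
    simp only [hφ', id]
    field_simp
    ring
  have hinj : InjOn φ (Ioo (0:ℝ) 1) := by
    intro a ha b hb h
    have h1 : (0:ℝ) < 1 - a := by linarith [ha.2]
    have h2 : (0:ℝ) < 1 - b := by linarith [hb.2]
    rw [hφ, div_eq_div_iff h1.ne' h2.ne'] at h
    nlinarith
  have himg : φ '' Ioo (0:ℝ) 1 = Ioi 0 := by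
    ext y
    constructor
    · rintro ⟨x, hx, rfl⟩
      exact div_pos hx.1 (by linarith [hx.2])
    · intro hy
      refine ⟨y / (1 + y), ⟨div_pos hy (by linarith [mem_Ioi.mp hy]), ?_⟩, ?_⟩
      · rw [div_lt_one (by linarith [mem_Ioi.mp hy])]; linarith [mem_Ioi.mp hy]
      · have h1 : (0:ℝ) < 1 + y := by linarith [mem_Ioi.mp hy]
        have hd : (0:ℝ) < 1 - y / (1 + y) := by
          rw [sub_pos, div_lt_one h1]; linarith
        simp only [hφ]
        rw [div_eq_iff hd.ne']
        field_simp
        ring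
  set g : ℝ → ℝ := fun u => u ^ (s - 1) * (1 + u) ^ (-(s + t)) with hg
  have hpt : ∀ x ∈ Ioo (0:ℝ) 1, |φ' x| • g (φ x) = x ^ (s - 1) * (1 - x) ^ (t - 1) := by
    intro x hx
    have hx0 : (0:ℝ) < x := hx.1
    have h1 : (0:ℝ) < 1 - x := by linarith [hx.2]
    have e0 : 1 + φ x = (1 - x)⁻¹ := by
      simp only [hφ]; field_simp; ring
    have e1 : φ' x = (1 - x) ^ (-2 : ℝ) := by
      simp only [hφ']
      rw [← Real.rpow_natCast (1 - x) 2, ← Real.rpow_neg h1.le]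
      norm_num
    simp only [hg, smul_eq_mul, e0, e1]; simp only [hφ]
    rw [abs_of_pos (Real.rpow_pos_of_pos h1 _), Real.div_rpow hx0.le h1.le,
      div_eq_mul_inv, Real.inv_rpow h1.le, ← Real.rpow_neg h1.le, ← Real.rpow_neg h1.le]
    rw [show (1 - x) ^ (-2:ℝ) * (x ^ (s-1) * (1-x) ^ (-(s-1)) * (1-x) ^ (-(-(s+t)))) =
      x ^ (s-1) * ((1-x) ^ (-2:ℝ) * (1-x) ^ (-(s-1)) * (1-x) ^ (-(-(s+t)))) from by ring,
      ← Real.rpow_add h1, ← Real.rpow_add h1]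
    congr 1
    ring
  have hint : IntegrableOn (fun x => x ^ (s - 1) * (1 - x) ^ (t - 1)) (Ioo (0:ℝ) 1) := by
    have := betaII hs ht
    rw [intervalIntegrable_iff_integrableOn_Ioc_of_le (by norm_num : (0:ℝ) ≤ 1)] at this
    exact this.mono_set Ioo_subset_Ioc_self
  constructor
  · rw [← himg, integrableOn_image_iff_integrableOn_abs_deriv_smul measurableSet_Ioo hderiv hinj]
    exact (integrableOn_congr_fun hpt measurableSet_Ioo).mpr hint
  · rw [← himg, integral_image_eq_integral_abs_deriv_smul measurableSet_Ioo hderiv hinj,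
      setIntegral_congr_fun measurableSet_Ioo hpt, ← integral_Ioc_eq_integral_Ioo,
      ← intervalIntegral.integral_of_le (by norm_num : (0:ℝ) ≤ 1)]
    exact betaReal hs ht

lemma mainIntegral {α β p q k : ℝ} (hα : 0 < α) (hβ : 0 < β) (hp : 0 < p) (hq : 0 < q)
    (hk : 0 < k) (hkp : k * p < 1) (hkq : 1 < k * q) :
    IntegrableOn (fun z : ℝ => ((α * z ^ p + β * z ^ q) ^ k)⁻¹) (Ioi 0) ∧
      ∫ z in Ioi (0:ℝ), ((α * z ^ p + β * z ^ q) ^ k)⁻¹ =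
        Real.Gamma ((1 - k * p) / (q - p)) * Real.Gamma ((k * q - 1) / (q - p)) /
          (α ^ k * Real.Gamma k * (q - p)) * (α / β) ^ ((1 - k * p) / (q - p)) := by
  have hpq : p < q := by
    rcases lt_or_ge p q with h | h
    · exact h
    · exfalso; nlinarith
  set r : ℝ := q - p with hrdef
  have hr : 0 < r := by simp only [hrdef]; linarith
  set s : ℝ := (1 - k * p) / r with hsdef
  set b : ℝ := (k * q - 1) / r with hbdef
  have hs : 0 < s := div_pos (by linarith) hr
  have hb : 0 < b := div_pos (by linarith) hr
  have hsb : s + b = k := by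
    rw [hsdef, hbdef, ← add_div, div_eq_iff hr.ne', hrdef]
    ring
  have hab : (0:ℝ) < α / β := div_pos hα hβ
  set C : ℝ := (α / β) ^ r⁻¹ with hCdef
  have hC : 0 < C := rpow_pos_of_pos hab _
  set φ : ℝ → ℝ := fun u => C * u ^ r⁻¹ with hφ
  set φ' : ℝ → ℝ := fun u => C * (r⁻¹ * u ^ (r⁻¹ - 1)) with hφ'
  have hderiv : ∀ u ∈ Ioi (0:ℝ), HasDerivWithinAt φ (φ' u) (Ioi 0) u := fun u hu =>
    (((hasDerivAt_rpow_const (Or.inl (mem_Ioi.mp hu).ne')).const_mul C)).hasDerivWithinAt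
  have hinj : InjOn φ (Ioi (0:ℝ)) := by
    have : StrictMonoOn φ (Ioi (0:ℝ)) := fun u hu v _ huv =>
      mul_lt_mul_of_pos_left
        (Real.rpow_lt_rpow (le_of_lt (mem_Ioi.mp hu)) huv (by positivity)) hC
    exact this.injOn
  have himg : φ '' Ioi (0:ℝ) = Ioi 0 := by
    ext y
    constructor
    · rintro ⟨u, hu, rfl⟩
      exact mul_pos hC (rpow_pos_of_pos (mem_Ioi.mp hu) _)
    · intro hy
      have hy0 : 0 < y := mem_Ioi.mp hy
      refine ⟨(y / C) ^ r, rpow_pos_of_pos (div_pos hy0 hC) _, ?_⟩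
      simp only [hφ]
      rw [← Real.rpow_mul (le_of_lt (div_pos hy0 hC)), mul_inv_cancel₀ hr.ne', Real.rpow_one]
      field_simp
  set D : ℝ := (α / β) ^ s / (α ^ k * r) with hDdef
  set F : ℝ → ℝ := fun z => ((α * z ^ p + β * z ^ q) ^ k)⁻¹ with hF
  have hpt : ∀ u ∈ Ioi (0:ℝ), |φ' u| • F (φ u) = D * (u ^ (s - 1) * (1 + u) ^ (-k)) := by
    intro u hu
    have hu0 : 0 < u := mem_Ioi.mp hu
    have hup : (0:ℝ) < u ^ (p * r⁻¹) := rpow_pos_of_pos hu0 _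
    have h1u : (0:ℝ) < 1 + u := by linarith
    -- rewrite powers of φ u
    have hzp : (φ u) ^ p = C ^ p * u ^ (p * r⁻¹) := by
      simp only [hφ]
      rw [Real.mul_rpow hC.le (Real.rpow_nonneg hu0.le _), ← Real.rpow_mul hu0.le]
      ring_nf
    have hzq : (φ u) ^ q = C ^ q * u ^ (q * r⁻¹) := by
      simp only [hφ]
      rw [Real.mul_rpow hC.le (Real.rpow_nonneg hu0.le _), ← Real.rpow_mul hu0.le]
      ring_nf
    have hCq : β * C ^ q = α * C ^ p := by
      have h1 : C ^ r = α / β := by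
        simp only [hCdef]
        rw [← Real.rpow_mul hab.le, inv_mul_cancel₀ hr.ne', Real.rpow_one]
      have h2 : C ^ q = C ^ p * (α / β) := by
        rw [← h1, ← Real.rpow_add hC]
        congr 1
        simp [hrdef]
      rw [h2]
      field_simp
    have huq : u ^ (q * r⁻¹) = u ^ (p * r⁻¹) * u := by
      have hexp : q * r⁻¹ = p * r⁻¹ + 1 := by
        field_simp [hrdef]
        linarith [hrdef]
      rw [hexp, Real.rpow_add hu0, Real.rpow_one]
    have hACp : (0:ℝ) < α * C ^ p := by positivity
    have hsum : α * (φ u) ^ p + β * (φ u) ^ q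
        = (α * C ^ p) * (u ^ (p * r⁻¹) * (1 + u)) := by
      rw [hzp, hzq, huq]
      linear_combination (u ^ (p * r⁻¹) * u) * hCq
    simp only [hF, smul_eq_mul]
    rw [hsum, Real.mul_rpow hACp.le (by positivity), Real.mul_rpow hup.le h1u.le,
      Real.mul_rpow hα.le (by positivity : (0:ℝ) ≤ C ^ p),
      ← Real.rpow_mul hC.le, ← Real.rpow_mul hu0.le]
    simp only [hφ']
    rw [abs_of_pos (by positivity)]
    rw [mul_inv, mul_inv, mul_inv, ← Real.rpow_neg hC.le, ← Real.rpow_neg hu0.le,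
      ← Real.rpow_neg h1u.le]
    have hCc : C * C ^ (-(p * k)) = (α / β) ^ s := by
      nth_rewrite 1 [← Real.rpow_one C]
      rw [← Real.rpow_add hC]
      simp only [hCdef]
      rw [← Real.rpow_mul hab.le]
      congr 1
      rw [hsdef]
      field_simp
      ring
    have huu : u ^ (r⁻¹ - 1) * u ^ (-(p * r⁻¹ * k)) = u ^ (s - 1) := by
      rw [← Real.rpow_add hu0]
      congr 1
      rw [hsdef]
      field_simp
      ring
    calc C * (r⁻¹ * u ^ (r⁻¹ - 1)) *
          ((α ^ k)⁻¹ * C ^ (-(p * k)) * (u ^ (-(p * r⁻¹ * k)) * (1 + u) ^ (-k)))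
        = (C * C ^ (-(p * k))) * (u ^ (r⁻¹ - 1) * u ^ (-(p * r⁻¹ * k))) * (1 + u) ^ (-k)
            * r⁻¹ * (α ^ k)⁻¹ := by ring
      _ = D * (u ^ (s - 1) * (1 + u) ^ (-k)) := by
          rw [hCc, huu, hDdef]
          field_simp
  have hbeta := betaIoi hs hb
  rw [hsb] at hbeta
  constructor
  · rw [← himg,
      integrableOn_image_iff_integrableOn_abs_deriv_smul measurableSet_Ioi hderiv hinj]
    exact (integrableOn_congr_fun hpt measurableSet_Ioi).mpr (hbeta.1.const_mul D)
  · rw [← himg, integral_image_eq_integral_abs_deriv_smul measurableSet_Ioi hderiv hinj,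
      setIntegral_congr_fun measurableSet_Ioi hpt, MeasureTheory.integral_const_mul, hbeta.2,
      hDdef]
    have hGk : Real.Gamma k ≠ 0 := (Real.Gamma_pos_of_pos hk).ne'
    have hak : (0:ℝ) < α ^ k := Real.rpow_pos_of_pos hα _
    field_simp


open RealInnerProductSpace

/-- Lyapunov characterization of predefined-time stability: if a C¹,
positive definite, radially unbounded function `V` satisfies
`⟨∇V(x), f(x)⟩ ≤ -(γ/T_c)(α V^p + β V^q)^k` away from the origin, then every solution
of `x' = f(x)` reaches the origin before the predefined time `T_c`. -/
theorem lyapunov_predefined_time_stability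
    (n : ℕ)
    (α β p q k : ℝ) (hα : 0 < α) (hβ : 0 < β) (hp : 0 < p) (hq : 0 < q) (hk : 0 < k)
    (hkp : k * p < 1) (hkq : 1 < k * q)
    (Tc : ℝ) (hTc : 0 < Tc)
    (f : EuclideanSpace ℝ (Fin n) → EuclideanSpace ℝ (Fin n)) (hf0 : f 0 = 0)
    (V : EuclideanSpace ℝ (Fin n) → ℝ)
    (hV1 : ContDiff ℝ 1 V)
    (hV0 : V 0 = 0)
    (hVpos : ∀ y, y ≠ 0 → 0 < V y)
    (hVrad : ∀ M : ℝ, ∃ R : ℝ, ∀ y, R ≤ ‖y‖ → M ≤ V y)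
    (hVdec : ∀ y, y ≠ 0 →
      ⟪gradient V y, f y⟫ ≤
        -(Real.Gamma ((1 - k * p) / (q - p)) * Real.Gamma ((k * q - 1) / (q - p)) /
            (α ^ k * Real.Gamma k * (q - p)) * (α / β) ^ ((1 - k * p) / (q - p)) / Tc) *
          (α * V y ^ p + β * V y ^ q) ^ k)
    (x : ℝ → EuclideanSpace ℝ (Fin n))
    (hx : ∀ t, 0 ≤ t → HasDerivAt x (f (x t)) t) :
    ∀ t, Tc ≤ t → x t = 0 := by
  have hpq : p < q := by
    rcases lt_or_ge p q with h | h
    · exact h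
    · exfalso; nlinarith
  obtain ⟨hFint, hFval⟩ := mainIntegral hα hβ hp hq hk hkp hkq
  set F : ℝ → ℝ := fun z => ((α * z ^ p + β * z ^ q) ^ k)⁻¹ with hFdef
  set γv : ℝ := Real.Gamma ((1 - k * p) / (q - p)) * Real.Gamma ((k * q - 1) / (q - p)) /
      (α ^ k * Real.Gamma k * (q - p)) * (α / β) ^ ((1 - k * p) / (q - p)) with hγdef
  have hγ : 0 < γv := by
    have h1 : 0 < Real.Gamma ((1 - k * p) / (q - p)) :=
      Real.Gamma_pos_of_pos (div_pos (by linarith) (by linarith))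
    have h2 : 0 < Real.Gamma ((k * q - 1) / (q - p)) :=
      Real.Gamma_pos_of_pos (div_pos (by linarith) (by linarith))
    have h3 : 0 < Real.Gamma k := Real.Gamma_pos_of_pos hk
    have h4 : (0:ℝ) < α ^ k := Real.rpow_pos_of_pos hα _
    have h5 : (0:ℝ) < (α / β) ^ ((1 - k * p) / (q - p)) :=
      Real.rpow_pos_of_pos (div_pos hα hβ) _
    rw [hγdef]
    have h6 : (0:ℝ) < q - p := by linarith
    positivity
  set c : ℝ := γv / Tc with hcdef
  have hc : 0 < c := div_pos hγ hTc
  set g : ℝ → ℝ := fun t => V (x t) with hgdef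
  have hVnn : ∀ y, 0 ≤ V y := by
    intro y
    rcases eq_or_ne y 0 with rfl | hy
    · exact le_of_eq hV0.symm
    · exact (hVpos y hy).le
  have hgd : ∀ t, 0 ≤ t → HasDerivAt g (⟪gradient V (x t), f (x t)⟫) t := by
    intro t ht
    have hdV : DifferentiableAt ℝ V (x t) := (hV1.differentiable one_ne_zero).differentiableAt
    have h1 : HasFDerivAt V ((InnerProductSpace.toDual ℝ _) (gradient V (x t))) (x t) :=
      hasGradientAt_iff_hasFDerivAt.mp hdV.hasGradientAt
    have h2 := h1.comp_hasDerivAt t (hx t ht)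
    simpa [InnerProductSpace.toDual_apply_apply, hgdef, Function.comp_def] using h2
  -- base positivity fact
  have hbase : ∀ z : ℝ, 0 < z → 0 < α * z ^ p + β * z ^ q := by
    intro z hz
    have := Real.rpow_pos_of_pos hz p
    have := Real.rpow_pos_of_pos hz q
    positivity
  have hdle : ∀ t, 0 ≤ t → ⟪gradient V (x t), f (x t)⟫ ≤ 0 := by
    intro t ht
    by_cases hxt : x t = 0
    · rw [hxt, hf0, inner_zero_right]
    · refine (hVdec _ hxt).trans ?_
      have h0 : 0 < V (x t) := hVpos _ hxt
      have hb := hbase _ h0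
      have hB : 0 ≤ (α * V (x t) ^ p + β * V (x t) ^ q) ^ k := Real.rpow_nonneg hb.le _
      nlinarith
  have hanti : AntitoneOn g (Ici (0:ℝ)) := by
    apply antitoneOn_of_deriv_nonpos (convex_Ici 0)
    · exact fun t ht => (hgd t ht).continuousAt.continuousWithinAt
    · intro t ht
      rw [interior_Ici] at ht
      exact (hgd t (le_of_lt ht)).differentiableAt.differentiableWithinAt
    · intro t ht
      rw [interior_Ici] at ht
      rw [(hgd t ht.le).deriv]
      exact hdle t ht.le
  -- continuity of F on positive reals
  have hFat : ∀ v : ℝ, 0 < v → ContinuousAt F v := by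
    intro v hv
    have h1 : ContinuousAt (fun z : ℝ => α * z ^ p + β * z ^ q) v :=
      (continuousAt_const.mul (Real.continuousAt_rpow_const v p (Or.inl hv.ne'))).add
        (continuousAt_const.mul (Real.continuousAt_rpow_const v q (Or.inl hv.ne')))
    have hb := hbase v hv
    exact (h1.rpow_const (Or.inl hb.ne')).inv₀ (Real.rpow_pos_of_pos hb _).ne'
  have hFii : ∀ v : ℝ, 0 < v → IntervalIntegrable F volume 0 v := by
    intro v hv
    rw [intervalIntegrable_iff_integrableOn_Ioc_of_le hv.le]
    exact hFint.mono_set Ioc_subset_Ioi_self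
  set Φ : ℝ → ℝ := fun v => ∫ z in (0:ℝ)..v, F z with hΦdef
  have hΦd : ∀ v : ℝ, 0 < v → HasDerivAt Φ (F v) v := by
    intro v hv
    refine intervalIntegral.integral_hasDerivAt_right (hFii v hv) ?_ (hFat v hv)
    exact ContinuousAt.stronglyMeasurableAtFilter isOpen_Ioi (fun z hz => hFat z hz) v hv
  have hxTc : x Tc = 0 := by
    by_contra hne
    have hgTc : 0 < g Tc := hVpos _ hne
    have hglb : ∀ t ∈ Icc (0:ℝ) Tc, g Tc ≤ g t := fun t ht =>
      hanti (mem_Ici.mpr ht.1) (mem_Ici.mpr hTc.le) ht.2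
    set h : ℝ → ℝ := fun t => c * t + Φ (g t) with hhdef
    have hhd : ∀ t ∈ Icc (0:ℝ) Tc,
        HasDerivAt h (c + F (g t) * ⟪gradient V (x t), f (x t)⟫) t := by
      intro t ht
      have h1 : HasDerivAt (fun τ : ℝ => c * τ) c t := by
        simpa using (hasDerivAt_id t).const_mul c
      have h2 : HasDerivAt (fun τ : ℝ => Φ (g τ)) (F (g t) * ⟪gradient V (x t), f (x t)⟫) t :=
        (hΦd (g t) (lt_of_lt_of_le hgTc (hglb t ht))).comp t (hgd t ht.1)
      exact h1.add h2
    have hhanti : AntitoneOn h (Icc (0:ℝ) Tc) := by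
      apply antitoneOn_of_deriv_nonpos (convex_Icc 0 Tc)
      · exact fun t ht => (hhd t ht).continuousAt.continuousWithinAt
      · intro t ht
        rw [interior_Icc] at ht
        exact (hhd t ⟨ht.1.le, ht.2.le⟩).differentiableAt.differentiableWithinAt
      · intro t ht
        rw [interior_Icc] at ht
        rw [(hhd t ⟨ht.1.le, ht.2.le⟩).deriv]
        have hxt : x t ≠ 0 := by
          intro h0
          have : g t = 0 := by simp [hgdef, h0, hV0]
          have := hglb t ⟨ht.1.le, ht.2.le⟩
          linarith
        have hgt : 0 < g t := hVpos _ hxt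
        have hb := hbase _ hgt
        have hBpos : 0 < (α * g t ^ p + β * g t ^ q) ^ k := Real.rpow_pos_of_pos hb _
        have hd := hVdec _ hxt
        have hFg : F (g t) = ((α * g t ^ p + β * g t ^ q) ^ k)⁻¹ := rfl
        have hFpos : 0 < F (g t) := by rw [hFg]; exact inv_pos.mpr hBpos
        have key : F (g t) * ⟪gradient V (x t), f (x t)⟫ ≤ -c := by
          have h3 : F (g t) * ⟪gradient V (x t), f (x t)⟫ ≤
              F (g t) * (-(γv / Tc) * (α * g t ^ p + β * g t ^ q) ^ k) :=
            mul_le_mul_of_nonneg_left hd hFpos.le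
          have h4 : F (g t) * (-(γv / Tc) * (α * g t ^ p + β * g t ^ q) ^ k) = -c := by
            rw [hFg, hcdef]
            field_simp
          linarith
        linarith
    have hineq := hhanti (Set.left_mem_Icc.mpr hTc.le) (Set.right_mem_Icc.mpr hTc.le) hTc.le
    -- hineq : h Tc ≤ h 0
    have hΦ0le : Φ (g 0) ≤ γv := by
      have hg0 : 0 < g 0 := lt_of_lt_of_le hgTc (hglb 0 ⟨le_refl 0, hTc.le⟩)
      have : Φ (g 0) = ∫ z in Ioc (0:ℝ) (g 0), F z := by
        rw [hΦdef]
        exact intervalIntegral.integral_of_le hg0.le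
      rw [this, ← hFval]
      refine setIntegral_mono_set hFint ?_ (HasSubset.Subset.eventuallyLE Ioc_subset_Ioi_self)
      filter_upwards [ae_restrict_mem measurableSet_Ioi] with z hz
      exact le_of_lt (inv_pos.mpr (Real.rpow_pos_of_pos (hbase z hz) _))
    have hΦTc : 0 < Φ (g Tc) := by
      rw [hΦdef]
      refine intervalIntegral.intervalIntegral_pos_of_pos_on (hFii _ hgTc) ?_ hgTc
      intro z hz
      exact inv_pos.mpr (Real.rpow_pos_of_pos (hbase z hz.1) _)
    have hcTc : c * Tc = γv := by
      rw [hcdef]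
      field_simp
    have e0 : h 0 = Φ (g 0) := by simp [hhdef]
    have eTc : h Tc = c * Tc + Φ (g Tc) := rfl
    rw [e0, eTc, hcTc] at hineq
    linarith
  intro t ht
  have hgTc0 : g Tc = 0 := by simp [hgdef, hxTc, hV0]
  have hle : g t ≤ g Tc := hanti (mem_Ici.mpr hTc.le) (mem_Ici.mpr (hTc.le.trans ht)) ht
  by_contra hne
  have := hVpos _ hne
  rw [hgTc0] at hle
  have : g t ≤ 0 := hle
  exact absurd (hVpos _ hne) (not_lt.mpr this)
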